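/- arXiv:1810.08105 — 2 statements merged into one kernel-verified Lean document; each statement's English description precedes it below -/
import Mathlib

section
/- Let z ∈ (-1,1) and ξ ∈ S^{d-1}. A point η ∈ S^{d-1} satisfies ⟨h_z(η), ξ⟩ = z·ξ_d if and only if ⟨η, g_z(ξ)⟩ = 0. In other words, h_z^{-1}(C_z^ξ) = C_0^{g_z(ξ)}, where C_z^ξ = {η ∈ S^{d-1} : ⟨η,ξ⟩ = z·ξ_d} and C_0^{g_z(ξ)} = {η ∈ S^{d-1} : ⟨η, g_z(ξ)⟩ = 0}. -/
open MeasureTheory Real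

noncomputable section

/-- Euclidean space `ℝ^(d+1)`; the unit sphere in it is `S^d` (the paper's `S^{d-1}` with
ambient dimension `d+1`). -/
abbrev E (d : ℕ) : Type := EuclideanSpace ℝ (Fin (d + 1))

/-- The map `h_z` of the paper. -/
def hMap (d : ℕ) (z : ℝ) (η : E d) : E d := WithLp.toLp 2 fun i =>
  if i = Fin.last d then (z + η (Fin.last d)) / (1 + z * η (Fin.last d))
  else Real.sqrt (1 - z ^ 2) * η i / (1 + z * η (Fin.last d))

/-- The map `g_z` of the paper. -/
def gMap (d : ℕ) (z : ℝ) (ξ : E d) : E d := WithLp.toLp 2 fun i =>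
  if i = Fin.last d then
    Real.sqrt (1 - z ^ 2) * ξ (Fin.last d) / Real.sqrt (1 - z ^ 2 * ξ (Fin.last d) ^ 2)
  else ξ i / Real.sqrt (1 - z ^ 2 * ξ (Fin.last d) ^ 2)

/-- The claimed inverse of `g_z`. -/
def gInv (d : ℕ) (z : ℝ) (ω : E d) : E d := WithLp.toLp 2 fun i =>
  if i = Fin.last d then
    ω (Fin.last d) / Real.sqrt (1 - z ^ 2 + z ^ 2 * ω (Fin.last d) ^ 2)
  else Real.sqrt (1 - z ^ 2) * ω i / Real.sqrt (1 - z ^ 2 + z ^ 2 * ω (Fin.last d) ^ 2)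

/-- The point reflection `r_z` of the sphere about the point `z·ε^d`. -/
def rMap (d : ℕ) (z : ℝ) (ω : E d) : E d := WithLp.toLp 2 fun i =>
  if i = Fin.last d then
    (2 * z - z ^ 2 * ω (Fin.last d) - ω (Fin.last d)) / (1 + z ^ 2 - 2 * z * ω (Fin.last d))
  else (z ^ 2 - 1) * ω i / (1 + z ^ 2 - 2 * z * ω (Fin.last d))

/-- The north pole `ε^d = (0,…,0,1)`. -/
def northPole (d : ℕ) : E d := WithLp.toLp 2 fun i => if i = Fin.last d then (1 : ℝ) else 0




lemma coord_sq_le {d : ℕ} (η : E d) (hη : ‖η‖ = 1) (i : Fin (d + 1)) : η i ^ 2 ≤ 1 := by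
  have h := EuclideanSpace.norm_eq η
  rw [hη] at h
  have hsum : (∑ j, ‖η j‖ ^ 2) = 1 := by
    have hnn : (0:ℝ) ≤ ∑ j, ‖η j‖ ^ 2 := Finset.sum_nonneg fun j _ => sq_nonneg _
    nlinarith [Real.sq_sqrt hnn, h.symm]
  calc η i ^ 2 = ‖η i‖ ^ 2 := by rw [Real.norm_eq_abs, sq_abs]
    _ ≤ ∑ j, ‖η j‖ ^ 2 :=
        Finset.single_le_sum (f := fun j => ‖η j‖ ^ 2) (fun j _ => sq_nonneg _)
          (Finset.mem_univ i)
    _ = 1 := hsum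

/-- `⟨h_z(η),ξ⟩ = zξ_d` iff `⟨η,g_z(ξ)⟩ = 0`; equivalently
`h_z⁻¹(C_z^ξ) = C_0^{g_z(ξ)}` as subsets of the sphere. -/
theorem hMap_preimage_subsphere (d : ℕ) (hd : 2 ≤ d) (z : ℝ) (hz : -1 < z) (hz' : z < 1)
    (ξ : E d) (hξ : ‖ξ‖ = 1) :
    (∀ η : E d, ‖η‖ = 1 →
      ((∑ i, hMap d z η i * ξ i) = z * ξ (Fin.last d) ↔ (∑ i, η i * gMap d z ξ i) = 0)) ∧
    {η : E d | ‖η‖ = 1 ∧ (∑ i, hMap d z η i * ξ i) = z * ξ (Fin.last d)} =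
      {η : E d | ‖η‖ = 1 ∧ (∑ i, η i * gMap d z ξ i) = 0} := by
  have hz2 : z ^ 2 < 1 := by nlinarith
  set c := Real.sqrt (1 - z ^ 2) with hcdef
  have hc : 0 < c := Real.sqrt_pos.mpr (by nlinarith)
  have hc2 : c ^ 2 = 1 - z ^ 2 := Real.sq_sqrt (by nlinarith)
  have hξd : ξ (Fin.last d) ^ 2 ≤ 1 := coord_sq_le ξ hξ _
  set q := Real.sqrt (1 - z ^ 2 * ξ (Fin.last d) ^ 2) with hqdef
  have hq : 0 < q := Real.sqrt_pos.mpr (by nlinarith)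
  have main : ∀ η : E d, ‖η‖ = 1 →
      ((∑ i, hMap d z η i * ξ i) = z * ξ (Fin.last d) ↔ (∑ i, η i * gMap d z ξ i) = 0) := by
    intro η hη
    have hηd : η (Fin.last d) ^ 2 ≤ 1 := coord_sq_le η hη _
    have hD : 0 < 1 + z * η (Fin.last d) := by nlinarith [sq_nonneg (z + η (Fin.last d))]
    set s := ∑ i : Fin d, η i.castSucc * ξ i.castSucc with hsdef
    set A := s + c * (η (Fin.last d) * ξ (Fin.last d)) with hAdef
    have h1 : (∑ i, hMap d z η i * ξ i) =
        (c * s + (z + η (Fin.last d)) * ξ (Fin.last d)) / (1 + z * η (Fin.last d)) := by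
      rw [Fin.sum_univ_castSucc]
      have key : ∀ i : Fin d, hMap d z η i.castSucc * ξ i.castSucc =
          η i.castSucc * ξ i.castSucc * c / (1 + z * η (Fin.last d)) := fun i => by
        simp only [hMap, PiLp.toLp_apply, if_neg (Fin.castSucc_lt_last i).ne]
        ring
      rw [Finset.sum_congr rfl (fun i _ => key i)]
      simp only [hMap, PiLp.toLp_apply, if_pos rfl, if_true]
      rw [← Finset.sum_div, ← Finset.sum_mul, ← hsdef]
      field_simp
    have h2 : (∑ i, η i * gMap d z ξ i) = A / q := by
      rw [Fin.sum_univ_castSucc]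
      have key : ∀ i : Fin d, η i.castSucc * gMap d z ξ i.castSucc =
          η i.castSucc * ξ i.castSucc / q := fun i => by
        simp only [gMap, PiLp.toLp_apply, if_neg (Fin.castSucc_lt_last i).ne]
        ring
      rw [Finset.sum_congr rfl (fun i _ => key i)]
      simp only [gMap, PiLp.toLp_apply, if_pos rfl, if_true, ← hqdef]
      rw [← Finset.sum_div, ← hsdef, hAdef, add_div]
      field_simp
      ring
    rw [h1, h2, div_eq_iff hD.ne', div_eq_zero_iff]
    constructor
    · intro h
      left
      have hcA : c * A = 0 := by
        rw [hAdef]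
        linear_combination h + (η (Fin.last d) * ξ (Fin.last d)) * hc2
      exact (mul_eq_zero.mp hcA).resolve_left hc.ne'
    · intro h
      have hA : A = 0 := h.resolve_right hq.ne'
      have hcA : c * (s + c * (η (Fin.last d) * ξ (Fin.last d))) = 0 := by
        rw [← hAdef, hA, mul_zero]
      linear_combination hcA - (η (Fin.last d) * ξ (Fin.last d)) * hc2
  refine ⟨main, ?_⟩
  ext η
  simp only [Set.mem_setOf_eq]
  exact and_congr_right fun hη => main η hη

end
end

section
/- Let z ∈ (-1,1), ξ ∈ S^{d-1}, and η ∈ S^{d-1} with ⟨η, g_z(ξ)⟩ = 0. If e, e' are tangent vectors at η to the subsphere C_0^{g_z(ξ)} (i.e., ⟨e,η⟩ = ⟨e,g_z(ξ)⟩ = 0 and similarly for e'), then ⟨J e, J e'⟩ = ((1-z²)/(1+zη_d)²)·⟨e, e'⟩, where J is the Jacobian matrix of the extension of h_z at η. In particular, the differential of h_z is a conformal scaling by factor √(1-z²)/(1+zη_d) on this tangent space. -/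
open MeasureTheory Real

noncomputable section

/-- The Jacobian matrix of (the extension of) `h_z` at a point `η` of the sphere. -/
def Jh (d : ℕ) (z : ℝ) (η : E d) : Matrix (Fin (d + 1)) (Fin (d + 1)) ℝ := fun l m =>
  if l = Fin.last d then
    (if m = Fin.last d then (1 - z ^ 2) / (1 + z * η (Fin.last d)) ^ 2 else 0)
  else
    (if m = Fin.last d then -η l * (z * Real.sqrt (1 - z ^ 2)) / (1 + z * η (Fin.last d)) ^ 2
     else if l = m then Real.sqrt (1 - z ^ 2) / (1 + z * η (Fin.last d)) else 0)

lemma Jh_row (d : ℕ) (z : ℝ) (η e : E d) (l : Fin (d + 1)) :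
    (∑ m, Jh d z η l m * e m) =
      if l = Fin.last d then (1 - z ^ 2) / (1 + z * η (Fin.last d)) ^ 2 * e (Fin.last d)
      else Real.sqrt (1 - z ^ 2) / (1 + z * η (Fin.last d)) * e l +
        -η l * (z * Real.sqrt (1 - z ^ 2)) / (1 + z * η (Fin.last d)) ^ 2 * e (Fin.last d) := by
  unfold Jh
  by_cases hl : l = Fin.last d
  · subst hl
    simp [ite_mul, Finset.sum_ite_eq']
  · simp only [if_neg hl]
    have key : ∀ m : Fin (d + 1),
        (if m = Fin.last d then
            -η l * (z * Real.sqrt (1 - z ^ 2)) / (1 + z * η (Fin.last d)) ^ 2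
          else if l = m then Real.sqrt (1 - z ^ 2) / (1 + z * η (Fin.last d)) else 0) * e m =
        (if m = Fin.last d then
            -η l * (z * Real.sqrt (1 - z ^ 2)) / (1 + z * η (Fin.last d)) ^ 2 * e (Fin.last d)
          else 0) +
        (if m = l then Real.sqrt (1 - z ^ 2) / (1 + z * η (Fin.last d)) * e l else 0) := by
      intro m
      by_cases h1 : m = Fin.last d
      · subst h1
        simp [Ne.symm hl]
      · by_cases h2 : m = l
        · subst h2
          simp [h1]
        · have h3 : ¬ l = m := fun h => h2 h.symm
          simp [h1, h2, h3]
    rw [Finset.sum_congr rfl fun m _ => key m, Finset.sum_add_distrib,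
      Finset.sum_ite_eq', Finset.sum_ite_eq']
    simp [add_comm]

set_option maxHeartbeats 1000000 in
/-- On the tangent space of `C_0^{g_z(ξ)}` at `η`, the differential of `h_z` is a conformal
scaling: `⟨Je, Je'⟩ = ((1-z²)/(1+zη_d)²)⟨e, e'⟩`. -/
theorem jacobian_conformal (d : ℕ) (hd : 2 ≤ d) (z : ℝ) (hz : -1 < z) (hz' : z < 1)
    (ξ : E d) (hξ : ‖ξ‖ = 1) (η : E d) (hη : ‖η‖ = 1)
    (hηξ : (∑ i, η i * gMap d z ξ i) = 0)
    (e e' : E d)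
    (he₁ : (∑ i, e i * η i) = 0) (he₂ : (∑ i, e i * gMap d z ξ i) = 0)
    (he'₁ : (∑ i, e' i * η i) = 0) (he'₂ : (∑ i, e' i * gMap d z ξ i) = 0) :
    (∑ l, (∑ m, Jh d z η l m * e m) * (∑ m, Jh d z η l m * e' m)) =
      (1 - z ^ 2) / (1 + z * η (Fin.last d)) ^ 2 * ∑ i, e i * e' i := by
  have hz2 : (0:ℝ) < 1 - z ^ 2 := by nlinarith
  have hs2 : Real.sqrt (1 - z ^ 2) ^ 2 = 1 - z ^ 2 := Real.sq_sqrt hz2.le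
  have hη2 : (∑ i, η i ^ 2) = 1 := by
    have h := EuclideanSpace.norm_eq η
    rw [hη] at h
    have h2 : Real.sqrt (∑ i, ‖η i‖ ^ 2) ^ 2 = 1 := by rw [← h]; norm_num
    rw [Real.sq_sqrt (by positivity)] at h2
    simpa [Real.norm_eq_abs, sq_abs] using h2
  have hηd : η (Fin.last d) ^ 2 ≤ 1 := by
    have h := Finset.single_le_sum (f := fun i => η i ^ 2)
      (fun i _ => sq_nonneg _) (Finset.mem_univ (Fin.last d))
    rw [hη2] at h; exact h
  have ha : (1 + z * η (Fin.last d)) ≠ 0 := by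
    have h1 : (z * η (Fin.last d)) ^ 2 < 1 := by nlinarith
    nlinarith [sq_nonneg (1 + z * η (Fin.last d))]
  simp only [Jh_row]
  rw [Fin.sum_univ_castSucc
    (f := fun l => (if l = Fin.last d then
          (1 - z ^ 2) / (1 + z * η (Fin.last d)) ^ 2 * e (Fin.last d)
        else Real.sqrt (1 - z ^ 2) / (1 + z * η (Fin.last d)) * e l +
          -η l * (z * Real.sqrt (1 - z ^ 2)) / (1 + z * η (Fin.last d)) ^ 2 * e (Fin.last d)) *
        (if l = Fin.last d then
          (1 - z ^ 2) / (1 + z * η (Fin.last d)) ^ 2 * e' (Fin.last d)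
        else Real.sqrt (1 - z ^ 2) / (1 + z * η (Fin.last d)) * e' l +
          -η l * (z * Real.sqrt (1 - z ^ 2)) / (1 + z * η (Fin.last d)) ^ 2 * e' (Fin.last d)))]
  have hne : ∀ j : Fin d, (j.castSucc = Fin.last d) = False :=
    fun j => eq_false (Fin.castSucc_lt_last j).ne
  simp only [hne, if_false, if_pos rfl, ↓reduceIte]
  have hS1 : (∑ j : Fin d, e j.castSucc * e' j.castSucc) =
      (∑ i, e i * e' i) - e (Fin.last d) * e' (Fin.last d) := by
    rw [Fin.sum_univ_castSucc (f := fun i => e i * e' i)]; ring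
  have hS2 : (∑ j : Fin d, e j.castSucc * η j.castSucc) =
      -(e (Fin.last d) * η (Fin.last d)) := by
    rw [Fin.sum_univ_castSucc (f := fun i => e i * η i)] at he₁; linarith
  have hS3 : (∑ j : Fin d, e' j.castSucc * η j.castSucc) =
      -(e' (Fin.last d) * η (Fin.last d)) := by
    rw [Fin.sum_univ_castSucc (f := fun i => e' i * η i)] at he'₁; linarith
  have hS4 : (∑ j : Fin d, η j.castSucc ^ 2) = 1 - η (Fin.last d) ^ 2 := by
    rw [Fin.sum_univ_castSucc (f := fun i => η i ^ 2)] at hη2; linarith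
  have hexp : (∑ j : Fin d,
      (Real.sqrt (1 - z ^ 2) / (1 + z * η (Fin.last d)) * e j.castSucc +
        -η j.castSucc * (z * Real.sqrt (1 - z ^ 2)) / (1 + z * η (Fin.last d)) ^ 2 *
          e (Fin.last d)) *
      (Real.sqrt (1 - z ^ 2) / (1 + z * η (Fin.last d)) * e' j.castSucc +
        -η j.castSucc * (z * Real.sqrt (1 - z ^ 2)) / (1 + z * η (Fin.last d)) ^ 2 *
          e' (Fin.last d))) =
      (Real.sqrt (1 - z ^ 2) ^ 2 / (1 + z * η (Fin.last d)) / (1 + z * η (Fin.last d))) *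
          (∑ j : Fin d, e j.castSucc * e' j.castSucc)
        - (z * Real.sqrt (1 - z ^ 2) ^ 2 / (1 + z * η (Fin.last d)) /
            (1 + z * η (Fin.last d)) ^ 2) * e' (Fin.last d) *
          (∑ j : Fin d, e j.castSucc * η j.castSucc)
        - (z * Real.sqrt (1 - z ^ 2) ^ 2 / (1 + z * η (Fin.last d)) /
            (1 + z * η (Fin.last d)) ^ 2) * e (Fin.last d) *
          (∑ j : Fin d, e' j.castSucc * η j.castSucc)
        + (z ^ 2 * Real.sqrt (1 - z ^ 2) ^ 2 / (1 + z * η (Fin.last d)) ^ 2 /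
            (1 + z * η (Fin.last d)) ^ 2) *
          (e (Fin.last d) * e' (Fin.last d)) * (∑ j : Fin d, η j.castSucc ^ 2) := by
    rw [Finset.mul_sum, Finset.mul_sum, Finset.mul_sum, Finset.mul_sum,
      ← Finset.sum_sub_distrib, ← Finset.sum_sub_distrib, ← Finset.sum_add_distrib]
    exact Finset.sum_congr rfl fun j _ => by ring
  rw [hexp, hS1, hS2, hS3, hS4, hs2]
  field_simp [ha]
  ring

end
end
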